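/- For 1≤i≤m and 1≤j≤n, let C_{i,j} denote the set of elements of P_{m,n} whose first two coordinates are (i−1, j−1). The map sending an order ideal O of P_{m,n} to the matrix (h_{i,j})_{0≤i≤m,0≤j≤n} defined by h_{0,k}=k for 0≤k≤n, h_{ℓ,0}=ℓ for 0≤ℓ≤m, and h_{i,j} = i + j − 2·|O ∩ C_{i,j}| for 1≤i≤m, 1≤j≤n, is a bijection from J(P_{m,n}) onto the set of (m,n)-partial height-function matrices. -/

import Mathlib

/-- The underlying set of the PASM poset `P_{m,n}`: triples `(i,j,k) ∈ ℤ³` with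
`0 ≤ k ≤ m-1`, `k ≤ j ≤ n-1`, and `k ≤ i ≤ m-1`. -/
def Pset (m n : ℕ) : Set (ℤ × ℤ × ℤ) :=
  {p | 0 ≤ p.2.2 ∧ p.2.2 ≤ (m : ℤ) - 1 ∧
       p.2.2 ≤ p.2.1 ∧ p.2.1 ≤ (n : ℤ) - 1 ∧
       p.2.2 ≤ p.1 ∧ p.1 ≤ (m : ℤ) - 1}

/-- The generating covering relations of `P_{m,n}`: `PCovBy m n x y` says that `y`
covers `x`, i.e. `y = (i,j,k)` and `x` is one of `(i+1,j,k)`, `(i,j+1,k)`,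
`(i-1,j,k-1)`, `(i,j-1,k-1)`, with both triples elements of `P_{m,n}`. -/
def PCovBy (m n : ℕ) (x y : ℤ × ℤ × ℤ) : Prop :=
  x ∈ Pset m n ∧ y ∈ Pset m n ∧
  (x = (y.1 + 1, y.2.1, y.2.2) ∨ x = (y.1, y.2.1 + 1, y.2.2) ∨
   x = (y.1 - 1, y.2.1, y.2.2 - 1) ∨ x = (y.1, y.2.1 - 1, y.2.2 - 1))

/-- The partial order of `P_{m,n}`: the reflexive-transitive closure of the
generating covering relations. -/
def Ple (m n : ℕ) (x y : ℤ × ℤ × ℤ) : Prop :=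
  Relation.ReflTransGen (PCovBy m n) x y

/-- The rank function of `P_{m,n}`: `(i,j,k) ↦ m + n - 2 - i - j + 2k`. -/
def Prank (m n : ℕ) (p : ℤ × ℤ × ℤ) : ℤ :=
  (m : ℤ) + n - 2 - p.1 - p.2.1 + 2 * p.2.2

/-- An order ideal of `P_{m,n}`: a downward-closed subset of `Pset m n`. -/
def IsOI (m n : ℕ) (O : Set (ℤ × ℤ × ℤ)) : Prop :=
  O ⊆ Pset m n ∧ ∀ y ∈ O, ∀ z, Ple m n z y → z ∈ O

/-- An `(m,n)`-partial height-function matrix: an `(m+1) × (n+1)` matrix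
`(h i j)_{0 ≤ i ≤ m, 0 ≤ j ≤ n}` of nonnegative integers with `h 0 k = k`,
`h ℓ 0 = ℓ`, and any two horizontally or vertically adjacent entries
differing by exactly 1.  (Represented as a function `ℕ → ℕ → ℤ` vanishing
outside the index range.) -/
def IsPHF (m n : ℕ) (h : ℕ → ℕ → ℤ) : Prop :=
  -- normalization: zero outside the matrix
  (∀ i j, m < i ∨ n < j → h i j = 0) ∧
  -- entries are nonnegative
  (∀ i j, i ≤ m → j ≤ n → 0 ≤ h i j) ∧
  -- first row: h 0 k = k
  (∀ k, k ≤ n → h 0 k = k) ∧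
  -- first column: h ℓ 0 = ℓ
  (∀ l, l ≤ m → h l 0 = l) ∧
  -- vertically adjacent entries differ by exactly 1
  (∀ i j, i < m → j ≤ n → h (i+1) j = h i j + 1 ∨ h (i+1) j = h i j - 1) ∧
  -- horizontally adjacent entries differ by exactly 1
  (∀ i j, i ≤ m → j < n → h i (j+1) = h i j + 1 ∨ h i (j+1) = h i j - 1)

/-- `Cset m n i j` (for `1 ≤ i ≤ m`, `1 ≤ j ≤ n`): the set of elements of `P_{m,n}`
whose first two coordinates are `(i-1, j-1)`. -/
def Cset (m n i j : ℕ) : Set (ℤ × ℤ × ℤ) :=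
  {p | p ∈ Pset m n ∧ p.1 = (i : ℤ) - 1 ∧ p.2.1 = (j : ℤ) - 1}

/-- The map sending an order ideal `O` of `P_{m,n}` to the matrix `(h i j)` with
`h 0 k = k`, `h ℓ 0 = ℓ`, and `h i j = i + j - 2|O ∩ C_{i,j}|` for
`1 ≤ i ≤ m`, `1 ≤ j ≤ n` (normalized to vanish outside `[0,m] × [0,n]`). -/
noncomputable def idealToPHF (m n : ℕ) (O : Set (ℤ × ℤ × ℤ)) : ℕ → ℕ → ℤ :=
  fun i j =>
    if i ≤ m ∧ j ≤ n then
      if i = 0 then (j : ℤ)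
      else if j = 0 then (i : ℤ)
      else (i : ℤ) + j - 2 * (O ∩ Cset m n i j).ncard
    else 0

/-! ### Auxiliary development -/

section Aux

variable {m n : ℕ}

lemma ncard_Ico_int (a b : ℤ) : (Set.Ico a b).ncard = (b - a).toNat := by
  rw [← Finset.coe_Ico, Set.ncard_coe_finset]
  exact Int.card_Ico a b

lemma mem_Pset {a b k : ℤ} :
    ((a, b, k) : ℤ × ℤ × ℤ) ∈ Pset m n ↔
      0 ≤ k ∧ k ≤ (m : ℤ) - 1 ∧ k ≤ b ∧ b ≤ (n : ℤ) - 1 ∧ k ≤ a ∧ a ≤ (m : ℤ) - 1 :=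
  Iff.rfl

/-- The fiber of a set `O` over first coordinates `(a,b)`. -/
def fibO (O : Set (ℤ × ℤ × ℤ)) (a b : ℤ) : Set ℤ := {k | ((a, b, k) : ℤ × ℤ × ℤ) ∈ O}

/-- The count of the fiber. -/
noncomputable def cntO (O : Set (ℤ × ℤ × ℤ)) (a b : ℤ) : ℕ := (fibO O a b).ncard

lemma fibO_subset {O : Set (ℤ × ℤ × ℤ)} (hO : O ⊆ Pset m n) (a b : ℤ) :
    fibO O a b ⊆ Set.Ico 0 (m : ℤ) := by
  intro k hk
  have h := hO hk
  rw [mem_Pset] at h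
  exact ⟨h.1, by omega⟩

lemma fibO_finite {O : Set (ℤ × ℤ × ℤ)} (hO : O ⊆ Pset m n) (a b : ℤ) :
    (fibO O a b).Finite :=
  (Set.finite_Ico 0 (m : ℤ)).subset (fibO_subset hO a b)

lemma down_step {O : Set (ℤ × ℤ × ℤ)} (hO : IsOI m n O) {a b k : ℤ}
    (h : ((a, b, k) : ℤ × ℤ × ℤ) ∈ O) (hk : 1 ≤ k) :
    ((a, b, k - 1) : ℤ × ℤ × ℤ) ∈ O := by
  have hP := hO.1 h
  rw [mem_Pset] at hP
  have h1 : ((a - 1, b, k - 1) : ℤ × ℤ × ℤ) ∈ Pset m n := by rw [mem_Pset]; omega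
  have h2 : ((a, b, k - 1) : ℤ × ℤ × ℤ) ∈ Pset m n := by rw [mem_Pset]; omega
  have c1 : PCovBy m n (a - 1, b, k - 1) (a, b, k) :=
    ⟨h1, hO.1 h, Or.inr (Or.inr (Or.inl rfl))⟩
  have c2 : PCovBy m n (a, b, k - 1) (a - 1, b, k - 1) :=
    ⟨h2, h1, Or.inl (by norm_num)⟩
  exact hO.2 _ h _ (Relation.ReflTransGen.head c2 (Relation.ReflTransGen.single c1))

lemma down {O : Set (ℤ × ℤ × ℤ)} (hO : IsOI m n O) {a b k k' : ℤ}
    (h : ((a, b, k) : ℤ × ℤ × ℤ) ∈ O) (h0 : 0 ≤ k') (hle : k' ≤ k) :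
    ((a, b, k') : ℤ × ℤ × ℤ) ∈ O := by
  have key : ∀ d : ℕ, ∀ k : ℤ, ((a, b, k) : ℤ × ℤ × ℤ) ∈ O → 0 ≤ k - d →
      ((a, b, k - d) : ℤ × ℤ × ℤ) ∈ O := by
    intro d
    induction d with
    | zero => intro k hk _; simpa using hk
    | succ d ih =>
      intro k hk hpos
      have h1 : ((a, b, k - d) : ℤ × ℤ × ℤ) ∈ O := ih k hk (by push_cast at hpos ⊢; omega)
      have h2 := down_step hO h1 (by push_cast at hpos ⊢; omega)
      have e : k - ((d + 1 : ℕ) : ℤ) = (k - d) - 1 := by push_cast; ring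
      rw [e]
      exact h2
  have h3 := key (k - k').toNat k h (by omega)
  have e : k - (((k - k').toNat : ℕ) : ℤ) = k' := by omega
  rwa [e] at h3

lemma fib_segment {O : Set (ℤ × ℤ × ℤ)} (hO : IsOI m n O) (a b : ℤ) :
    fibO O a b = Set.Ico 0 ((cntO O a b : ℤ)) := by
  have hfin : (fibO O a b).Finite := fibO_finite hO.1 a b
  rcases (fibO O a b).eq_empty_or_nonempty with he | hne
  · unfold cntO; rw [he]; simp
  · obtain ⟨k0, hk0, hmax⟩ := hfin.exists_maximalFor id _ hne
    have hmax' : ∀ x ∈ fibO O a b, x ≤ k0 := fun x hx => by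
      by_contra hlt
      push_neg at hlt
      have h := hmax (j := x) hx (le_of_lt hlt)
      simp only [id] at h
      omega
    have h0 : (0 : ℤ) ≤ k0 := by
      have hP := hO.1 hk0
      rw [mem_Pset] at hP
      exact hP.1
    have hseg : fibO O a b = Set.Ico 0 (k0 + 1) := by
      ext k
      constructor
      · intro hk
        have hP := hO.1 hk
        rw [mem_Pset] at hP
        exact ⟨hP.1, by have := hmax' k hk; omega⟩
      · intro hk
        exact down hO hk0 hk.1 (by have := hk.2; omega)
    have hcc : cntO O a b = (k0 + 1 - 0).toNat := by
      unfold cntO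
      rw [hseg, ncard_Ico_int]
    rw [hseg, hcc]
    have e : (((k0 + 1 - 0).toNat : ℕ) : ℤ) = k0 + 1 := by omega
    rw [e]

lemma mem_cnt {O : Set (ℤ × ℤ × ℤ)} (hO : IsOI m n O) {a b k : ℤ} :
    ((a, b, k) : ℤ × ℤ × ℤ) ∈ O ↔ 0 ≤ k ∧ k < (cntO O a b : ℤ) := by
  have hk := Set.ext_iff.mp (fib_segment hO a b) k
  simpa [fibO, Set.mem_Ico] using hk

lemma cnt_le {O : Set (ℤ × ℤ × ℤ)} (hO : IsOI m n O) {a b : ℤ} :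
    (cntO O a b : ℤ) ≤ min a b + 1 ∨ cntO O a b = 0 := by
  rcases Nat.eq_zero_or_pos (cntO O a b) with h | h
  · exact Or.inr h
  · left
    have hsub : fibO O a b ⊆ Set.Ico 0 (min a b + 1) := by
      intro k hk
      have hP := hO.1 hk
      rw [mem_Pset] at hP
      exact ⟨hP.1, by omega⟩
    have h1 := Set.ncard_le_ncard hsub (Set.finite_Ico _ _)
    rw [ncard_Ico_int] at h1
    have hc : cntO O a b = (fibO O a b).ncard := rfl
    omega

lemma cnt_le' {O : Set (ℤ × ℤ × ℤ)} (hO : IsOI m n O) {a b : ℤ}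
    (ha : 0 ≤ a) (hb : 0 ≤ b) : (cntO O a b : ℤ) ≤ min a b + 1 := by
  rcases cnt_le hO (a := a) (b := b) with h | h
  · exact h
  · rw [h]; push_cast; omega

lemma cnt_mono_a {O : Set (ℤ × ℤ × ℤ)} (hO : IsOI m n O) {a b : ℤ}
    (ha : a + 1 ≤ (m : ℤ) - 1) : cntO O a b ≤ cntO O (a + 1) b := by
  have hsub : fibO O a b ⊆ fibO O (a + 1) b := by
    intro k hk
    have hP := hO.1 hk
    rw [mem_Pset] at hP
    have hx : ((a + 1, b, k) : ℤ × ℤ × ℤ) ∈ Pset m n := by rw [mem_Pset]; omega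
    have cov : PCovBy m n (a + 1, b, k) (a, b, k) := ⟨hx, hO.1 hk, Or.inl rfl⟩
    exact hO.2 _ hk _ (Relation.ReflTransGen.single cov)
  exact Set.ncard_le_ncard hsub (fibO_finite hO.1 _ _)

lemma cnt_mono_b {O : Set (ℤ × ℤ × ℤ)} (hO : IsOI m n O) {a b : ℤ}
    (hb : b + 1 ≤ (n : ℤ) - 1) : cntO O a b ≤ cntO O a (b + 1) := by
  have hsub : fibO O a b ⊆ fibO O a (b + 1) := by
    intro k hk
    have hP := hO.1 hk
    rw [mem_Pset] at hP
    have hx : ((a, b + 1, k) : ℤ × ℤ × ℤ) ∈ Pset m n := by rw [mem_Pset]; omega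
    have cov : PCovBy m n (a, b + 1, k) (a, b, k) := ⟨hx, hO.1 hk, Or.inr (Or.inl rfl)⟩
    exact hO.2 _ hk _ (Relation.ReflTransGen.single cov)
  exact Set.ncard_le_ncard hsub (fibO_finite hO.1 _ _)

lemma cnt_bdd_a {O : Set (ℤ × ℤ × ℤ)} (hO : IsOI m n O) (a b : ℤ) :
    (cntO O (a + 1) b : ℤ) ≤ (cntO O a b : ℤ) + 1 := by
  have hsub : fibO O (a + 1) b ⊆ Set.Ico 0 ((cntO O a b : ℤ) + 1) := by
    intro k hk
    have hP := hO.1 hk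
    rw [mem_Pset] at hP
    refine ⟨hP.1, ?_⟩
    rcases eq_or_lt_of_le hP.1 with h0 | h0
    · omega
    · have hx : ((a, b, k - 1) : ℤ × ℤ × ℤ) ∈ Pset m n := by rw [mem_Pset]; omega
      have cov : PCovBy m n (a, b, k - 1) (a + 1, b, k) :=
        ⟨hx, hO.1 hk, Or.inr (Or.inr (Or.inl (by norm_num)))⟩
      have hmem := hO.2 _ hk _ (Relation.ReflTransGen.single cov)
      have h1 := (mem_cnt hO).mp hmem
      omega
  have h1 := Set.ncard_le_ncard hsub (Set.finite_Ico _ _)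
  rw [ncard_Ico_int] at h1
  have hc1 : cntO O (a + 1) b = (fibO O (a + 1) b).ncard := rfl
  omega

lemma cnt_bdd_b {O : Set (ℤ × ℤ × ℤ)} (hO : IsOI m n O) (a b : ℤ) :
    (cntO O a (b + 1) : ℤ) ≤ (cntO O a b : ℤ) + 1 := by
  have hsub : fibO O a (b + 1) ⊆ Set.Ico 0 ((cntO O a b : ℤ) + 1) := by
    intro k hk
    have hP := hO.1 hk
    rw [mem_Pset] at hP
    refine ⟨hP.1, ?_⟩
    rcases eq_or_lt_of_le hP.1 with h0 | h0
    · omega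
    · have hx : ((a, b, k - 1) : ℤ × ℤ × ℤ) ∈ Pset m n := by rw [mem_Pset]; omega
      have cov : PCovBy m n (a, b, k - 1) (a, b + 1, k) :=
        ⟨hx, hO.1 hk, Or.inr (Or.inr (Or.inr (by norm_num)))⟩
      have hmem := hO.2 _ hk _ (Relation.ReflTransGen.single cov)
      have h1 := (mem_cnt hO).mp hmem
      omega
  have h1 := Set.ncard_le_ncard hsub (Set.finite_Ico _ _)
  rw [ncard_Ico_int] at h1
  have hc1 : cntO O a (b + 1) = (fibO O a (b + 1)).ncard := rfl
  omega

lemma triple_inj (a b : ℤ) : Function.Injective (fun k => ((a, b, k) : ℤ × ℤ × ℤ)) :=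
  fun x y hxy => by simpa using hxy

lemma ncard_inter_Cset {O : Set (ℤ × ℤ × ℤ)} (hO : IsOI m n O) (i j : ℕ) :
    (O ∩ Cset m n i j).ncard = cntO O ((i : ℤ) - 1) ((j : ℤ) - 1) := by
  have himg : O ∩ Cset m n i j
      = (fun k => (((i : ℤ) - 1, (j : ℤ) - 1, k) : ℤ × ℤ × ℤ)) ''
        fibO O ((i : ℤ) - 1) ((j : ℤ) - 1) := by
    ext ⟨x, y, k⟩
    constructor
    · rintro ⟨hpO, -, h1, h2⟩
      dsimp only at h1 h2
      subst h1; subst h2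
      exact ⟨k, hpO, rfl⟩
    · rintro ⟨k', hk', heq⟩
      obtain ⟨rfl, rfl, rfl⟩ : (i : ℤ) - 1 = x ∧ (j : ℤ) - 1 = y ∧ k' = k := by
        simpa [Prod.ext_iff] using heq
      exact ⟨hk', hO.1 hk', rfl, rfl⟩
  rw [himg, Set.ncard_image_of_injective _ (triple_inj _ _)]
  rfl

lemma idealToPHF_val {O : Set (ℤ × ℤ × ℤ)} (hO : IsOI m n O) {i j : ℕ}
    (hi : 1 ≤ i) (him : i ≤ m) (hj : 1 ≤ j) (hjn : j ≤ n) :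
    idealToPHF m n O i j = (i : ℤ) + j - 2 * cntO O ((i : ℤ) - 1) ((j : ℤ) - 1) := by
  unfold idealToPHF
  rw [if_pos ⟨him, hjn⟩, if_neg (by omega), if_neg (by omega), ncard_inter_Cset hO]

lemma idealToPHF_row (O : Set (ℤ × ℤ × ℤ)) {k : ℕ} (hk : k ≤ n) :
    idealToPHF m n O 0 k = (k : ℤ) := by
  unfold idealToPHF
  rw [if_pos ⟨Nat.zero_le m, hk⟩, if_pos rfl]

lemma idealToPHF_col (O : Set (ℤ × ℤ × ℤ)) {l : ℕ} (hl : l ≤ m) :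
    idealToPHF m n O l 0 = (l : ℤ) := by
  unfold idealToPHF
  rw [if_pos ⟨hl, Nat.zero_le n⟩]
  rcases Nat.eq_zero_or_pos l with rfl | h
  · rw [if_pos rfl]
  · rw [if_neg (by omega), if_pos rfl]

lemma mapsTo_aux {O : Set (ℤ × ℤ × ℤ)} (hO : IsOI m n O) :
    IsPHF m n (idealToPHF m n O) := by
  refine ⟨?_, ?_, ?_, ?_, ?_, ?_⟩
  · intro i j hij
    unfold idealToPHF
    rw [if_neg (by omega)]
  · -- nonnegativity
    intro i j hi hj
    rcases Nat.eq_zero_or_pos i with rfl | hi1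
    · rw [idealToPHF_row O hj]; positivity
    rcases Nat.eq_zero_or_pos j with rfl | hj1
    · rw [idealToPHF_col O hi]; positivity
    · rw [idealToPHF_val hO hi1 hi hj1 hj]
      have h1 := cnt_le' hO (a := (i : ℤ) - 1) (b := (j : ℤ) - 1) (by omega) (by omega)
      omega
  · intro k hk; exact idealToPHF_row O hk
  · intro l hl; exact idealToPHF_col O hl
  · -- vertical steps
    intro i j him hjn
    rcases Nat.eq_zero_or_pos j with rfl | hj1
    · left
      rw [idealToPHF_col O (by omega), idealToPHF_col O (by omega)]
      push_cast; ring
    rcases Nat.eq_zero_or_pos i with rfl | hi1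
    · rw [idealToPHF_row O hjn, idealToPHF_val hO le_rfl (by omega) hj1 hjn]
      have h1 := cnt_le' hO (a := ((1 : ℕ) : ℤ) - 1) (b := (j : ℤ) - 1) (by norm_num) (by omega)
      push_cast at h1 ⊢
      omega
    · rw [idealToPHF_val hO hi1 (by omega) hj1 hjn,
        idealToPHF_val hO (by omega) (by omega) hj1 hjn]
      have h1 := cnt_mono_a hO (a := (i : ℤ) - 1) (b := (j : ℤ) - 1) (by omega)
      have h2 := cnt_bdd_a hO ((i : ℤ) - 1) ((j : ℤ) - 1)
      have e1 : ((i : ℤ) - 1) + 1 = (i : ℤ) := by ring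
      have e2 : ((i + 1 : ℕ) : ℤ) - 1 = (i : ℤ) := by push_cast; ring
      rw [e1] at h1 h2
      rw [e2]
      push_cast
      omega
  · -- horizontal steps
    intro i j him hjn
    rcases Nat.eq_zero_or_pos i with rfl | hi1
    · left
      rw [idealToPHF_row O (by omega), idealToPHF_row O (by omega)]
      push_cast; ring
    rcases Nat.eq_zero_or_pos j with rfl | hj1
    · rw [idealToPHF_col O him, idealToPHF_val hO hi1 him le_rfl (by omega)]
      have h1 := cnt_le' hO (a := (i : ℤ) - 1) (b := ((1 : ℕ) : ℤ) - 1) (by omega) (by norm_num)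
      push_cast at h1 ⊢
      omega
    · rw [idealToPHF_val hO hi1 him hj1 (by omega),
        idealToPHF_val hO hi1 him (by omega) (by omega)]
      have h1 := cnt_mono_b hO (a := (i : ℤ) - 1) (b := (j : ℤ) - 1) (by omega)
      have h2 := cnt_bdd_b hO ((i : ℤ) - 1) ((j : ℤ) - 1)
      have e1 : ((j : ℤ) - 1) + 1 = (j : ℤ) := by ring
      have e2 : ((j + 1 : ℕ) : ℤ) - 1 = (j : ℤ) := by push_cast; ring
      rw [e1] at h1 h2
      rw [e2]
      push_cast
      omega

lemma inj_aux {O O' : Set (ℤ × ℤ × ℤ)} (hO : IsOI m n O) (hO' : IsOI m n O')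
    (heq : idealToPHF m n O = idealToPHF m n O') : O ⊆ O' := by
  rintro ⟨a, b, k⟩ hmem
  have hP := hO.1 hmem
  rw [mem_Pset] at hP
  obtain ⟨hk0, hkm, hkb, hbn, hka, ham⟩ := hP
  set i : ℕ := (a + 1).toNat with hidef
  set j : ℕ := (b + 1).toNat with hjdef
  have hia : (i : ℤ) = a + 1 := by omega
  have hjb : (j : ℤ) = b + 1 := by omega
  have h1 : 1 ≤ i := by omega
  have him : i ≤ m := by omega
  have hj1 : 1 ≤ j := by omega
  have hjn : j ≤ n := by omega
  have hval := congrFun (congrFun heq i) j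
  rw [idealToPHF_val hO h1 him hj1 hjn, idealToPHF_val hO' h1 him hj1 hjn] at hval
  have e1 : (i : ℤ) - 1 = a := by omega
  have e2 : (j : ℤ) - 1 = b := by omega
  rw [e1, e2] at hval
  have hceq : cntO O a b = cntO O' a b := by omega
  have hm1 := (mem_cnt hO (a := a) (b := b) (k := k)).mp hmem
  rw [mem_cnt hO']
  omega

lemma phf_parity {h : ℕ → ℕ → ℤ} (hh : IsPHF m n h) :
    ∀ i j, i ≤ m → j ≤ n → ∃ c : ℤ, (i : ℤ) + j - h i j = 2 * c := by
  obtain ⟨-, -, hrow, hcol, hvert, hhor⟩ := hh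
  intro i j him
  induction j with
  | zero =>
    intro _
    exact ⟨0, by rw [hcol i him]; push_cast; ring⟩
  | succ j ih =>
    intro hjn
    obtain ⟨c, hc⟩ := ih (by omega)
    rcases hhor i j him (by omega) with he | he
    · exact ⟨c, by rw [he]; push_cast at hc ⊢; omega⟩
    · exact ⟨c + 1, by rw [he]; push_cast at hc ⊢; omega⟩

lemma phf_lb1 {h : ℕ → ℕ → ℤ} (hh : IsPHF m n h) :
    ∀ i j, i ≤ m → j ≤ n → (j : ℤ) - i ≤ h i j := by
  obtain ⟨-, -, hrow, hcol, hvert, hhor⟩ := hh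
  intro i
  induction i with
  | zero => intro j _ hj; rw [hrow j hj]; simp
  | succ i ih =>
    intro j him hjn
    have h1 := ih j (by omega) hjn
    rcases hvert i j (by omega) hjn with he | he <;> omega

lemma phf_lb2 {h : ℕ → ℕ → ℤ} (hh : IsPHF m n h) :
    ∀ i j, i ≤ m → j ≤ n → (i : ℤ) - j ≤ h i j := by
  obtain ⟨-, -, hrow, hcol, hvert, hhor⟩ := hh
  intro i j him
  induction j with
  | zero => intro _; rw [hcol i him]; simp
  | succ j ih =>
    intro hjn
    have h1 := ih (by omega)
    rcases hhor i j him (by omega) with he | he <;> omega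

lemma phf_ub {h : ℕ → ℕ → ℤ} (hh : IsPHF m n h) :
    ∀ i j, i ≤ m → j ≤ n → h i j ≤ (i : ℤ) + j := by
  obtain ⟨-, -, hrow, hcol, hvert, hhor⟩ := hh
  intro i
  induction i with
  | zero => intro j _ hj; rw [hrow j hj]; simp
  | succ i ih =>
    intro j him hjn
    have h1 := ih j (by omega) hjn
    rcases hvert i j (by omega) hjn with he | he <;> omega

/-- Inverse of `idealToPHF`: the order ideal associated with a partial
height-function matrix. -/
def invPHF (m n : ℕ) (h : ℕ → ℕ → ℤ) : Set (ℤ × ℤ × ℤ) :=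
  {p | p ∈ Pset m n ∧ 2 * p.2.2 + h (p.1 + 1).toNat (p.2.1 + 1).toNat ≤ p.1 + p.2.1}

lemma cov_mem {h : ℕ → ℕ → ℤ} (hh : IsPHF m n h) {x y : ℤ × ℤ × ℤ}
    (hcov : PCovBy m n x y) (hy : y ∈ invPHF m n h) : x ∈ invPHF m n h := by
  have hvert := hh.2.2.2.2.1
  have hhor := hh.2.2.2.2.2
  obtain ⟨a, b, k⟩ := y
  obtain ⟨hxP, hyP, hcase⟩ := hcov
  obtain ⟨hyP', hineq⟩ := hy
  rw [mem_Pset] at hyP'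
  obtain ⟨hk0, hkm, hkb, hbn, hka, ham⟩ := hyP'
  dsimp only at hineq
  rcases hcase with he | he | he | he <;> subst he <;> refine ⟨hxP, ?_⟩ <;>
    rw [mem_Pset] at hxP <;> dsimp only at hxP ⊢
  · -- x = (a+1, b, k)
    obtain ⟨-, -, -, -, -, hxm⟩ := hxP
    have e1 : (a + 1 + 1).toNat = (a + 1).toNat + 1 := by omega
    rw [e1]
    have hd := hvert (a + 1).toNat (b + 1).toNat (by omega) (by omega)
    omega
  · -- x = (a, b+1, k)
    obtain ⟨-, -, -, hxn, -, -⟩ := hxP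
    have e1 : (b + 1 + 1).toNat = (b + 1).toNat + 1 := by omega
    rw [e1]
    have hd := hhor (a + 1).toNat (b + 1).toNat (by omega) (by omega)
    omega
  · -- x = (a-1, b, k-1)
    obtain ⟨hx0, -, -, -, hxk, -⟩ := hxP
    have e1 : (a + 1).toNat = (a - 1 + 1).toNat + 1 := by omega
    rw [e1] at hineq
    have hd := hvert (a - 1 + 1).toNat (b + 1).toNat (by omega) (by omega)
    omega
  · -- x = (a, b-1, k-1)
    obtain ⟨hx0, -, hxk, -, -, -⟩ := hxP
    have e1 : (b + 1).toNat = (b - 1 + 1).toNat + 1 := by omega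
    rw [e1] at hineq
    have hd := hhor (a + 1).toNat (b - 1 + 1).toNat (by omega) (by omega)
    omega

lemma invPHF_isOI {h : ℕ → ℕ → ℤ} (hh : IsPHF m n h) : IsOI m n (invPHF m n h) := by
  constructor
  · intro p hp; exact hp.1
  · intro y hy z hz
    refine Relation.ReflTransGen.head_induction_on hz hy ?_
    intro x c hxc _ hc
    exact cov_mem hh hxc hc

lemma invPHF_eq {h : ℕ → ℕ → ℤ} (hh : IsPHF m n h) :
    idealToPHF m n (invPHF m n h) = h := by
  funext i j
  by_cases hij : i ≤ m ∧ j ≤ n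
  · rcases Nat.eq_zero_or_pos i with rfl | hi1
    · rw [idealToPHF_row _ hij.2, hh.2.2.1 j hij.2]
    rcases Nat.eq_zero_or_pos j with rfl | hj1
    · rw [idealToPHF_col _ hij.1, hh.2.2.2.1 i hij.1]
    · obtain ⟨c, hc⟩ := phf_parity hh i j hij.1 hij.2
      have hub := phf_ub hh i j hij.1 hij.2
      have hl1 := phf_lb1 hh i j hij.1 hij.2
      have hl2 := phf_lb2 hh i j hij.1 hij.2
      have hset : invPHF m n h ∩ Cset m n i j
          = (fun k => (((i : ℤ) - 1, (j : ℤ) - 1, k) : ℤ × ℤ × ℤ)) '' Set.Ico 0 c := by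
        ext ⟨x, y, k⟩
        simp only [invPHF, Cset, Pset, Set.mem_inter_iff, Set.mem_setOf_eq, Set.mem_image,
          Set.mem_Ico, Prod.mk.injEq]
        constructor
        · rintro ⟨⟨hP, hineq⟩, -, hx, hy⟩
          subst hx; subst hy
          refine ⟨k, ⟨hP.1, ?_⟩, rfl, rfl, rfl⟩
          have e1 : ((i : ℤ) - 1 + 1).toNat = i := by omega
          have e2 : ((j : ℤ) - 1 + 1).toNat = j := by omega
          rw [e1, e2] at hineq
          omega
        · rintro ⟨k', ⟨hk0, hkc⟩, rfl, rfl, rfl⟩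
          have e1 : ((i : ℤ) - 1 + 1).toNat = i := by omega
          have e2 : ((j : ℤ) - 1 + 1).toNat = j := by omega
          rw [e1, e2]
          omega
      unfold idealToPHF
      rw [if_pos hij, if_neg (by omega), if_neg (by omega), hset,
        Set.ncard_image_of_injective _ (triple_inj _ _), ncard_Ico_int]
      omega
  · unfold idealToPHF
    rw [if_neg hij]
    exact (hh.1 i j (by omega)).symm

end Aux

/-- The map `O ↦ (h i j)` with `h 0 k = k`, `h ℓ 0 = ℓ` and
`h i j = i + j - 2|O ∩ C_{i,j}|` is a bijection from `J(P_{m,n})` onto the set of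
`(m,n)`-partial height-function matrices. -/
theorem ideal_bijects_with_phf (m n : ℕ) (hm : 1 ≤ m) (hn : 1 ≤ n) :
    Set.BijOn (idealToPHF m n) {O | IsOI m n O} {h | IsPHF m n h} := by
  refine ⟨?_, ?_, ?_⟩
  · intro O hO
    exact mapsTo_aux hO
  · intro O hO O' hO' heq
    exact Set.Subset.antisymm (inj_aux hO hO' heq) (inj_aux hO' hO heq.symm)
  · intro h hh
    exact ⟨invPHF m n h, invPHF_isOI hh, invPHF_eq hh⟩
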